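/- Let J be C², strictly concave with J(0)=J(1)=0 and maximizer m. Let ρ₋ < m and ρ₊ < ρ₋* (so (ρ₋,ρ₊) lies strictly below the critical line). Let ν be a probability measure on [ρ₋, ρ₊∨m] ⊆ [0,1] satisfying ∫ sign(λ − ρ₋)(J(λ) − J(ρ₋)) dν(λ) ≤ 0. Then ν = δ_{ρ₋}. -/

import Mathlib

open Set MeasureTheory

theorem quasistatic_stmt17 (J : ℝ → ℝ) (hJ : ContDiff ℝ 2 J)
    (hJ'' : ∀ u : ℝ, deriv (deriv J) u < 0) (h0 : J 0 = 0) (h1 : J 1 = 0)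
    (m : ℝ) (hm : m ∈ Set.Ioo (0:ℝ) 1) (hmax : IsMaxOn J (Set.Icc 0 1) m)
    (ρm ρp ρs : ℝ) (hρm0 : 0 ≤ ρm) (hρm : ρm < m)
    (hρs : ρs ∈ Set.Icc m 1) (hJρs : J ρs = J ρm)
    (hρp : ρp < ρs) (hρp1 : ρp ≤ 1)
    (ν : Measure ℝ) [IsProbabilityMeasure ν]
    (hsupp : ν (Set.Icc ρm (max ρp m))ᶜ = 0)
    (hint : ∫ l, Real.sign (l - ρm) * (J l - J ρm) ∂ν ≤ 0) :
    ν = Measure.dirac ρm := by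
  have hJd : Differentiable ℝ J := hJ.differentiable (by norm_num)
  have hJ1 : ContDiff ℝ 1 (deriv J) := by
    have := (contDiff_succ_iff_deriv (n := 1)).mp hJ
    exact this.2.2
  have hJ'd : Differentiable ℝ (deriv J) := hJ1.differentiable (by norm_num)
  have hanti : StrictAnti (deriv J) := strictAnti_of_deriv_neg hJ''
  have hderm : deriv J m = 0 := by
    have : IsLocalMax J m := by
      apply hmax.isLocalMax
      exact Icc_mem_nhds hm.1 hm.2
    exact this.deriv_eq_zero
  -- J strictly increasing on Iic m
  have hmono : StrictMonoOn J (Set.Iic m) := by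
    apply strictMonoOn_of_deriv_pos (convex_Iic m) hJd.continuous.continuousOn
    intro x hx
    rw [interior_Iic] at hx
    have := hanti hx
    rwa [hderm] at this
  -- J strictly decreasing on Ici m
  have hantiJ : StrictAntiOn J (Set.Ici m) := by
    apply strictAntiOn_of_deriv_neg (convex_Ici m) hJd.continuous.continuousOn
    intro x hx
    rw [interior_Ici] at hx
    have := hanti hx
    rwa [hderm] at this
  -- key: on the support interval, J l > J ρm unless l = ρm
  have key : ∀ l ∈ Set.Icc ρm (max ρp m), l ≠ ρm → J ρm < J l := by
    rintro l ⟨hl1, hl2⟩ hne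
    have hl1' : ρm < l := lt_of_le_of_ne hl1 (Ne.symm hne)
    rcases le_or_gt l m with h | h
    · exact hmono hρm.le h hl1'
    · have hlρp : l ≤ ρp := by
        rcases max_cases ρp m with ⟨he, _⟩ | ⟨he, _⟩
        · rwa [he] at hl2
        · rw [he] at hl2; exact absurd hl2 h.not_ge
      have hlρs : l < ρs := lt_of_le_of_lt hlρp hρp
      have := hantiJ h.le hρs.1 hlρs
      rwa [hJρs] at this
  set f : ℝ → ℝ := fun l => Real.sign (l - ρm) * (J l - J ρm) with hf
  have haemem : ∀ᵐ l ∂ν, l ∈ Set.Icc ρm (max ρp m) := by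
    rw [ae_iff]
    exact hsupp
  have hnonneg : ∀ᵐ l ∂ν, 0 ≤ f l := by
    filter_upwards [haemem] with l hl
    rcases eq_or_ne l ρm with rfl | hne
    · simp [hf]
    · have h1 : (0:ℝ) < l - ρm := sub_pos.mpr (lt_of_le_of_ne hl.1 (Ne.symm hne))
      have h2 := key l hl hne
      simp only [hf]
      rw [Real.sign_of_pos h1, one_mul]
      linarith
  -- measurability
  have hsignm : Measurable Real.sign := by
    unfold Real.sign
    exact Measurable.ite (measurableSet_lt measurable_id measurable_const)
      measurable_const (Measurable.ite (measurableSet_lt measurable_const measurable_id)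
      measurable_const measurable_const)
  have hfm : Measurable f := by
    exact (hsignm.comp (measurable_id.sub measurable_const)).mul
      ((hJd.continuous.measurable).sub measurable_const)
  -- boundedness and integrability
  obtain ⟨C, hC⟩ := (isCompact_Icc (a := ρm) (b := max ρp m)).exists_bound_of_continuousOn
    hJd.continuous.continuousOn
  have hbound : ∀ᵐ l ∂ν, ‖f l‖ ≤ C + ‖J ρm‖ := by
    filter_upwards [haemem] with l hl
    have hs : |Real.sign (l - ρm)| ≤ 1 := by
      rcases Real.sign_apply_eq (l - ρm) with h | h | h <;> rw [h] <;> norm_num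
    calc ‖f l‖ = |Real.sign (l - ρm)| * |J l - J ρm| := abs_mul _ _
      _ ≤ 1 * |J l - J ρm| := by
          apply mul_le_mul_of_nonneg_right hs (abs_nonneg _)
      _ = |J l - J ρm| := one_mul _
      _ ≤ ‖J l‖ + ‖J ρm‖ := abs_sub _ _
      _ ≤ C + ‖J ρm‖ := by
          have := hC l hl
          linarith
  have hintg : Integrable f ν := by
    refine ⟨hfm.aestronglyMeasurable, ?_⟩
    exact HasFiniteIntegral.of_bounded hbound
  have hzero : ∫ l, f l ∂ν = 0 :=
    le_antisymm hint (integral_nonneg_of_ae hnonneg)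
  have hfae : ∀ᵐ l ∂ν, f l = 0 := by
    have := (integral_eq_zero_iff_of_nonneg_ae hnonneg hintg).mp hzero
    filter_upwards [this] with l hl using hl
  have hdirac : ∀ᵐ l ∂ν, l = ρm := by
    filter_upwards [haemem, hfae] with l hl hfl
    by_contra hne
    have h1 : (0:ℝ) < l - ρm := sub_pos.mpr (lt_of_le_of_ne hl.1 (Ne.symm hne))
    have h2 := key l hl hne
    rw [hf] at hfl
    simp only at hfl
    rw [Real.sign_of_pos h1, one_mul, sub_eq_zero] at hfl
    exact h2.ne' hfl
  have hcompl : ν {ρm}ᶜ = 0 := by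
    rw [ae_iff] at hdirac
    exact hdirac
  have hsingle : ν {ρm} = 1 := by
    have := measure_add_measure_compl (μ := ν) (s := {ρm}) (measurableSet_singleton ρm)
    rw [hcompl, add_zero] at this
    simpa using this
  ext s hs
  rw [Measure.dirac_apply' _ hs]
  by_cases hmem : ρm ∈ s
  · have h1 : ν s ≤ 1 := prob_le_one
    have h2 : (1:ENNReal) = ν {ρm} := hsingle.symm
    have h3 : ν {ρm} ≤ ν s := measure_mono (singleton_subset_iff.mpr hmem)
    rw [indicator_of_mem hmem]
    simp only [Pi.one_apply]
    exact le_antisymm h1 (h2 ▸ h3)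
  · have : s ⊆ {ρm}ᶜ := fun x hx => by
      simp only [mem_compl_iff, mem_singleton_iff]
      rintro rfl; exact hmem hx
    rw [indicator_of_notMem hmem]
    exact le_antisymm ((measure_mono this).trans_eq hcompl) zero_le
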